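/- Let X be a Tychonoff (completely regular Hausdorff) space. Assume there exist an index set I, a family U = {U_i : i ∈ I} of open subsets of X, a set of points A = {a_i : i ∈ I} ⊆ X and a point z ∈ X such that: (i) a_i ∈ U_i for every i ∈ I; (ii) for each compact subset C of X, the set {i ∈ I : C ∩ U_i ≠ ∅} is finite; (iii) z is a cluster point of A, i.e., every neighborhood of z contains a point of A distinct from z. Then X is not an Ascoli space. -/

import Mathlib

open Topology OnePoint

/-- A topological space `Y` is *Ascoli* if for every compact subset `K` of `C(Y, ℝ)`
(endowed with the compact-open topology), the evaluation map `(y, f) ↦ f y` is jointly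
continuous on `Y × K`. -/
def IsAscoli (Y : Type*) [TopologicalSpace Y] : Prop :=
  ∀ K : Set C(Y, ℝ), IsCompact K →
    Continuous fun p : Y × K => (p.2 : C(Y, ℝ)) p.1

theorem stmt_5 {X : Type*} [TopologicalSpace X] [CompletelyRegularSpace X] [T2Space X]
    {I : Type*} (U : I → Set X) (a : I → X) (z : X)
    (hUopen : ∀ i, IsOpen (U i))
    (haU : ∀ i, a i ∈ U i)
    (hfin : ∀ C : Set X, IsCompact C → {i : I | (C ∩ U i).Nonempty}.Finite)
    (hz : z ∈ closure (Set.range a \ {z})) :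
    ¬ IsAscoli X := by
  intro hA
  -- Step 1: bump functions
  have hf : ∀ i, ∃ f : C(X, ℝ), f (a i) = 1 ∧ ∀ x ∉ U i, f x = 0 := by
    intro i
    obtain ⟨g, hgc, hg0, hg1⟩ := CompletelyRegularSpace.completely_regular (a i) (U i)ᶜ
      (hUopen i).isClosed_compl (by simp [haU i])
    refine ⟨⟨fun y => 1 - (g y : ℝ), by fun_prop⟩, by simp [hg0], fun x hx => ?_⟩
    have := hg1 hx
    simp only [ContinuousMap.coe_mk]
    rw [this]
    norm_num
  choose f hf1 hf0 using hf
  -- Step 2: the map from the one-point compactification of I (discrete)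
  letI : TopologicalSpace I := ⊥
  haveI : DiscreteTopology I := ⟨rfl⟩
  set F : OnePoint I → C(X, ℝ) := fun w => w.elim 0 f with hFdef
  have hFcoe : ∀ i : I, F (↑i) = f i := fun i => rfl
  have hFinf : F ∞ = 0 := rfl
  have hFcont : Continuous F := by
    rw [OnePoint.continuous_iff_from_discrete]
    show Filter.Tendsto (fun i : I => f i) Filter.cofinite (𝓝 (0 : C(X, ℝ)))
    rw [ContinuousMap.tendsto_compactOpen_iff_forall]
    intro C hC
    have hev : ∀ᶠ i in Filter.cofinite, (f i).restrict C = (0 : C(X, ℝ)).restrict C := by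
      refine Filter.eventually_cofinite.2 ?_
      refine (hfin C hC).subset ?_
      intro i hi
      simp only [Set.mem_setOf_eq] at hi ⊢
      by_contra h
      apply hi
      ext x
      have hx : (x : X) ∉ U i := fun hxU => h ⟨x, ⟨x.2, hxU⟩⟩
      simp [ContinuousMap.restrict, hf0 i x hx]
    exact Filter.Tendsto.congr' (hev.mono fun i h => h.symm) tendsto_const_nhds
  -- Step 3: K is compact
  set K : Set C(X, ℝ) := Set.range F with hKdef
  have hK : IsCompact K := isCompact_range hFcont
  -- Step 4: the composed evaluation map
  set G : X × OnePoint I → ℝ := fun p => F p.2 p.1 with hGdef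
  have hGcont : Continuous G := by
    have h1 : Continuous fun p : X × OnePoint I => ((p.1, ⟨F p.2, Set.mem_range_self _⟩) : X × K) :=
      continuous_fst.prodMk ((hFcont.comp continuous_snd).subtype_mk _)
    exact (hA K hK).comp h1
  -- Step 5: derive a contradiction
  have h0 : G (z, ∞) = 0 := by simp [hGdef, hFinf]
  have hnhds : G ⁻¹' Set.Iio 1 ∈ 𝓝 (z, ∞) := by
    apply hGcont.continuousAt.preimage_mem_nhds
    rw [h0]
    exact Iio_mem_nhds one_pos
  obtain ⟨W, hW, V, hV, hWV⟩ := mem_nhds_prod_iff.1 hnhds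
  obtain ⟨s, ⟨-, hsc⟩, hsV⟩ := OnePoint.hasBasis_nhds_infty.mem_iff.1 hV
  have hsfin : s.Finite := by rwa [← isCompact_iff_finite]
  -- find an index i with a i ∈ W and i ∉ s
  have : ∃ i, a i ∈ W ∧ i ∉ s := by
    by_contra h
    push_neg at h
    have hW' : W \ (a '' s \ {z}) ∈ 𝓝 z := by
      apply Filter.inter_mem hW
      show (a '' s \ {z})ᶜ ∈ 𝓝 z
      rw [mem_nhds_iff]
      exact ⟨(a '' s \ {z})ᶜ, le_refl _,
        (((hsfin.image a).diff (t := {z})).isClosed).isOpen_compl, by simp⟩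
    obtain ⟨x, hxW', hxr⟩ := mem_closure_iff_nhds.1 hz _ hW'
    obtain ⟨⟨i, rfl⟩, hxz⟩ := hxr
    have his : i ∈ s := h i hxW'.1
    exact hxW'.2 ⟨⟨i, his, rfl⟩, hxz⟩
  obtain ⟨i, hiW, his⟩ := this
  have hmem : ((a i, (↑i : OnePoint I)) : X × OnePoint I) ∈ W ×ˢ V :=
    ⟨hiW, hsV (Or.inl ⟨i, his, rfl⟩)⟩
  have := hWV hmem
  simp only [Set.mem_preimage, Set.mem_Iio, hGdef] at this
  rw [hFcoe, hf1 i] at this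
  exact lt_irrefl 1 this
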